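/- The function x(t) = e^{-C₁(t+C₂)}((e^{C₁(t+C₂)} - α₂)² - C₁²)/(4C₁²) solves the second-order ODE x'' = (x')²/x - α₂/2 - 1/(4x), at every point where x(t) ≠ 0, assuming C₁ ≠ 0. -/

import Mathlib

open Complex

theorem stmt_4 (α₂ C₁ C₂ : ℂ) (hC : C₁ ≠ 0) (x : ℂ → ℂ)
    (hx : ∀ t : ℂ, x t = Complex.exp (-(C₁*(t+C₂))) *
        ((Complex.exp (C₁*(t+C₂)) - α₂)^2 - C₁^2) / (4*C₁^2)) :
    ∀ t : ℂ, x t ≠ 0 →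
      deriv (deriv x) t = (deriv x t)^2 / x t - α₂/2 - 1/(4 * x t) := by
  set E : ℂ → ℂ := fun t => Complex.exp (C₁*(t+C₂)) with hEdef
  set F : ℂ → ℂ := fun t => Complex.exp (-(C₁*(t+C₂))) with hFdef
  have hFE : ∀ t, F t * E t = 1 := by
    intro t
    rw [hFdef, hEdef]
    simp [← Complex.exp_add]
  have h4C : (4*C₁^2 : ℂ) ≠ 0 := by
    simp [pow_eq_zero_iff, hC]
  have hx2 : x = fun t => (E t - 2*α₂ + (α₂^2 - C₁^2) * F t) / (4*C₁^2) := by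
    funext t
    rw [hx t]
    rw [div_eq_div_iff h4C h4C]
    have h := hFE t
    linear_combination (4*C₁^2*(E t - 2*α₂)) * h
  have hE' : ∀ t, HasDerivAt E (C₁ * E t) t := by
    intro t
    have h1 : HasDerivAt (fun t : ℂ => C₁*(t+C₂)) C₁ t := by
      simpa using ((hasDerivAt_id t).add_const C₂).const_mul C₁
    have := h1.cexp
    refine this.congr_deriv ?_
    simp only [hEdef]; ring
  have hF' : ∀ t, HasDerivAt F (-C₁ * F t) t := by
    intro t
    have h1 : HasDerivAt (fun t : ℂ => -(C₁*(t+C₂))) (-C₁) t := by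
      have := (((hasDerivAt_id t).add_const C₂).const_mul C₁).neg
      simp only [mul_one] at this
      exact this
    have := h1.cexp
    refine this.congr_deriv ?_
    simp only [hFdef]; ring
  have hd1 : ∀ t, HasDerivAt x ((C₁ * E t - C₁ * (α₂^2 - C₁^2) * F t) / (4*C₁^2)) t := by
    intro t
    rw [hx2]
    have := (((hE' t).sub_const (2*α₂)).add ((hF' t).const_mul (α₂^2 - C₁^2))).div_const (4*C₁^2)
    refine this.congr_deriv ?_
    ring
  have hdx : deriv x = fun t => (C₁ * E t - C₁ * (α₂^2 - C₁^2) * F t) / (4*C₁^2) := by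
    funext t
    exact (hd1 t).deriv
  have hd2 : ∀ t, HasDerivAt (deriv x) ((E t + (α₂^2 - C₁^2) * F t) / 4) t := by
    intro t
    rw [hdx]
    have := (((hE' t).const_mul C₁).sub ((hF' t).const_mul (C₁*(α₂^2 - C₁^2)))).div_const (4*C₁^2)
    refine this.congr_deriv ?_
    field_simp
    ring
  intro t hxt
  have hS : E t - 2*α₂ + (α₂^2 - C₁^2) * F t ≠ 0 := by
    intro h
    apply hxt
    rw [hx2]
    simp [h]
  rw [(hd2 t).deriv, hdx, hx2]
  have h := hFE t
  have hden : ((4*C₁^2)^2 * (E t - 2*α₂ + (α₂^2 - C₁^2) * F t) * 2 *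
      (4 * (E t - 2*α₂ + (α₂^2 - C₁^2) * F t))) ≠ 0 := by
    apply mul_ne_zero
    · exact mul_ne_zero (mul_ne_zero (pow_ne_zero 2 h4C) hS) two_ne_zero
    · exact mul_ne_zero (by norm_num) hS
  have hS' : E t - α₂ * 2 + (α₂ ^ 2 - C₁ ^ 2) * F t ≠ 0 := by rwa [mul_comm α₂]
  field_simp
  linear_combination (8*(α₂^2 - C₁^2)) * h
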